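/- The set of canonical partial term graphs over a signature Σ ordered by ≤⊥r is a cpo: it has least element ⊥, and every directed set G has a least upper bound, which is the canonical term graph determined by the labelled quotient tree (P, l, ∼) with P = ⋃_{g∈G} P(g), ∼ = ⋃_{g∈G} ∼_g, and l(π) = f if f ∈ Σ and g(π) = f for some g ∈ G, and l(π) = ⊥ otherwise. -/

import Mathlib

set_option autoImplicit false

namespace TGR

/-- A signature: a type of symbols, each with a finite arity. -/
structure Signature where
  Sym : Type
  ar : Sym → ℕ

/-- The signature `Σ_⊥`: `Σ` extended by a fresh nullary symbol `⊥` (here `none`). -/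
def Signature.bot (S : Signature) : Signature where
  Sym := Option S.Sym
  ar := fun o => match o with
    | none => 0
    | some f => S.ar f

/-- A rooted graph over a signature `S` with nodes `N`: a labelling, a successor
function respecting arities, and a root node. -/
structure TermGraph (S : Signature) (N : Type) where
  lab : N → S.Sym
  suc : (n : N) → Fin (S.ar (lab n)) → N
  root : N

namespace TermGraph

variable {S : Signature} {N M K : Type}

/-- `g.IsPos π n`: `π` is a position (path of successor indices from the root) of node `n`. -/
inductive IsPos (g : TermGraph S N) : List ℕ → N → Prop
  | root : IsPos g [] g.root
  | step {π : List ℕ} {n : N} (h : IsPos g π n) (i : Fin (S.ar (g.lab n))) :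
      IsPos g (π ++ [(i : ℕ)]) (g.suc n i)

/-- All nodes are reachable from the root. -/
def Reachable (g : TermGraph S N) : Prop :=
  ∀ n : N, ∃ π : List ℕ, g.IsPos π n

/-- The set of positions of `g`. -/
def pos (g : TermGraph S N) : Set (List ℕ) :=
  {π | ∃ n : N, g.IsPos π n}

/-- The set of positions of node `n` in `g`. -/
def nodePos (g : TermGraph S N) (n : N) : Set (List ℕ) :=
  {π | g.IsPos π n}

/-- `π ∼_g π'`: `π` and `π'` are positions of the same node. -/
def Aliases (g : TermGraph S N) (π π' : List ℕ) : Prop :=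
  ∃ n : N, g.IsPos π n ∧ g.IsPos π' n

/-- A position is acyclic if it passes no node twice. -/
def IsAcyclicPos (g : TermGraph S N) (π : List ℕ) : Prop :=
  ∀ (π₁ π₂ : List ℕ) (n : N), π₁ <+: π₂ → π₂ <+: π →
    g.IsPos π₁ n → g.IsPos π₂ n → π₁ = π₂

/-- The set of acyclic positions of node `n` in `g`. -/
def nodePosAcy (g : TermGraph S N) (n : N) : Set (List ℕ) :=
  {π | g.IsPos π n ∧ g.IsAcyclicPos π}

/-- The set of acyclic positions of `g`. -/
def posAcy (g : TermGraph S N) : Set (List ℕ) :=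
  {π | (∃ n : N, g.IsPos π n) ∧ g.IsAcyclicPos π}

/-- The depth of a node: the minimal length of its positions. -/
noncomputable def depth (g : TermGraph S N) (n : N) : ℕ :=
  sInf {k : ℕ | ∃ π : List ℕ, g.IsPos π n ∧ π.length = k}

open Classical in
/-- The (unique) node at a position. -/
noncomputable def nodeAt (g : TermGraph S N) (π : List ℕ) : N :=
  if h : ∃ n : N, g.IsPos π n then h.choose else g.root

/-- The label `g(π)` at a position. -/
noncomputable def labAt (g : TermGraph S N) (π : List ℕ) : S.Sym :=
  g.lab (g.nodeAt π)

/-- `Δ`-homomorphism: root, labelling and successor conditions, the latter two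
suspended on `Δ`-labelled nodes. -/
structure IsDHom (Δ : Set S.Sym) (g : TermGraph S N) (h : TermGraph S M)
    (φ : N → M) : Prop where
  root_eq : φ g.root = h.root
  lab_eq : ∀ n : N, g.lab n ∉ Δ → h.lab (φ n) = g.lab n
  suc_eq : ∀ n : N, g.lab n ∉ Δ → ∀ (i : ℕ) (hi : i < S.ar (g.lab n))
      (hi' : i < S.ar (h.lab (φ n))),
      φ (g.suc n ⟨i, hi⟩) = h.suc (φ n) ⟨i, hi'⟩

/-- Rigidity: `Pa_g(n) = Pa_h(φ n)` for all non-`Δ`-labelled nodes `n`. -/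
def IsRigid (Δ : Set S.Sym) (g : TermGraph S N) (h : TermGraph S M)
    (φ : N → M) : Prop :=
  ∀ n : N, g.lab n ∉ Δ → g.nodePosAcy n = h.nodePosAcy (φ n)

/-- Rigid `Δ`-homomorphism. -/
def IsRigidDHom (Δ : Set S.Sym) (g : TermGraph S N) (h : TermGraph S M)
    (φ : N → M) : Prop :=
  IsDHom Δ g h φ ∧ IsRigid Δ g h φ

/-- Isomorphism of term graphs: a homomorphism with an inverse homomorphism. -/
def Iso (g : TermGraph S N) (h : TermGraph S M) : Prop :=
  ∃ (φ : N → M) (ψ : M → N), IsDHom ∅ g h φ ∧ IsDHom ∅ h g ψ ∧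
    (∀ n : N, ψ (φ n) = n) ∧ (∀ m : M, φ (ψ m) = m)

/-- A partial term graph (over `Σ_⊥`) is total if no node is labelled `⊥`. -/
def Total (g : TermGraph S.bot N) : Prop := ∀ n : N, g.lab n ≠ none

/-- Rigid `⊥`-homomorphism between partial term graphs. -/
def IsRigidBotHom (g : TermGraph S.bot N) (h : TermGraph S.bot M)
    (φ : N → M) : Prop :=
  IsRigidDHom ({none} : Set (Option S.Sym)) g h φ

/-- The `⊥`-depth of a partial term graph: the minimal depth of a `⊥`-labelled
node, `ω` (`⊤`) if there is none. -/
noncomputable def botDepth (g : TermGraph S.bot N) : ℕ∞ :=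
  sInf {d : ℕ∞ | ∃ n : N, g.lab n = none ∧ (g.depth n : ℕ∞) = d}

/-- `m` is an acyclic predecessor of `n`: some acyclic position `π ++ [i]` of `n`
has `π` a position of `m`. -/
def acyPred (g : TermGraph S N) (n : N) : Set N :=
  {m | ∃ (π : List ℕ) (i : ℕ), (π ++ [i]) ∈ g.nodePosAcy n ∧ g.IsPos π m}

/-- Retained nodes of the truncation at depth `d`: the least set of nodes
containing all nodes of depth `< d` and closed under acyclic predecessors. -/
inductive Retained (g : TermGraph S N) (d : ℕ) : N → Prop
  | shallow {n : N} : g.depth n < d → Retained g d n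
  | pred {n m : N} : Retained g d n → m ∈ g.acyPred n → Retained g d m

theorem not_retained_zero {g : TermGraph S N} (n : N) : ¬ g.Retained 0 n := by
  intro h
  induction h with
  | shallow hd => exact Nat.not_lt_zero _ hd
  | pred _ _ ih => exact ih

/-- Fringe nodes of the truncation at depth `d` (a pair `(n, i)` stands for the
fresh node `n^i`); at depth `0` the fringe is just (a copy of) the root. -/
def IsFringe (g : TermGraph S.bot N) (d : ℕ) (p : N × ℕ) : Prop :=
  if d = 0 then p = (g.root, 0)
  else g.Retained d p.1 ∧ ∃ h : p.2 < S.bot.ar (g.lab p.1),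
    (¬ g.Retained d (g.suc p.1 ⟨p.2, h⟩) ∨
      (d - 1 ≤ g.depth p.1 ∧ p.1 ∉ g.acyPred (g.suc p.1 ⟨p.2, h⟩)))

/-- The node set of the rigid truncation: retained nodes plus fringe nodes. -/
def TNode (g : TermGraph S.bot N) (d : ℕ) : Type :=
  {x : N ⊕ (N × ℕ) // Sum.elim (g.Retained d) (g.IsFringe d) x}

def truncLab (g : TermGraph S.bot N) (d : ℕ) (x : TNode g d) : S.bot.Sym :=
  Sum.elim (fun n => g.lab n) (fun _ => none) x.1

open Classical in
noncomputable def truncSuc (g : TermGraph S.bot N) (d : ℕ) :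
    (x : TNode g d) → Fin (S.bot.ar (truncLab g d x)) → TNode g d
  | ⟨Sum.inl n, hn⟩ => fun i =>
      if hf : g.IsFringe d (n, (i : ℕ)) then ⟨Sum.inr (n, (i : ℕ)), hf⟩
      else
        ⟨Sum.inl (g.suc n ⟨(i : ℕ), i.isLt⟩), by
          show g.Retained d (g.suc n ⟨(i : ℕ), i.isLt⟩)
          rcases Nat.eq_zero_or_pos d with hd | hd
          · subst hd
            exact ((not_retained_zero n) hn).elim
          · by_contra hc
            apply hf
            show g.IsFringe d (n, (i : ℕ))
            unfold IsFringe
            rw [if_neg (Nat.pos_iff_ne_zero.mp hd)]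
            exact ⟨hn, i.isLt, Or.inl hc⟩⟩
  | ⟨Sum.inr p, hp⟩ => fun i => absurd i.isLt (Nat.not_lt_zero _)

noncomputable def truncRoot (g : TermGraph S.bot N) (d : ℕ) : TNode g d :=
  if hd : d = 0 then
    ⟨Sum.inr (g.root, 0), by
      subst hd
      show g.IsFringe 0 (g.root, 0)
      simp [IsFringe]⟩
  else
    ⟨Sum.inl g.root, by
      show g.Retained d g.root
      exact Retained.shallow (lt_of_le_of_lt
        (Nat.sInf_le ⟨[], IsPos.root, rfl⟩) (Nat.pos_of_ne_zero hd))⟩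

/-- The rigid truncation `g†d` of a partial term graph at finite depth `d`. -/
noncomputable def trunc (g : TermGraph S.bot N) (d : ℕ) :
    TermGraph S.bot (TNode g d) where
  lab := truncLab g d
  suc := truncSuc g d
  root := truncRoot g d

end TermGraph

/-- A canonical term graph: a term graph whose nodes are sets of positions,
each node being exactly its set of positions, with all nodes reachable. -/
structure CTG (S : Signature) where
  nodes : Set (Set (List ℕ))
  tg : TermGraph S ↥nodes
  reach : tg.Reachable
  canon : ∀ n : ↥nodes, (n : Set (List ℕ)) = tg.nodePos n

namespace CTG

variable {S : Signature}

def pos (g : CTG S) : Set (List ℕ) := g.tg.pos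
def Aliases (g : CTG S) : List ℕ → List ℕ → Prop := g.tg.Aliases
def posAcy (g : CTG S) : Set (List ℕ) := g.tg.posAcy
noncomputable def labAt (g : CTG S) : List ℕ → S.Sym := g.tg.labAt

/-- A canonical partial term graph is total if it has no `⊥`-labelled node. -/
def Total (g : CTG S.bot) : Prop := g.tg.Total

/-- The rigid partial order `g ≤⊥r h`: there is a rigid `⊥`-homomorphism
from `g` to `h`. -/
def LeR (g h : CTG S.bot) : Prop :=
  ∃ φ, TermGraph.IsRigidBotHom g.tg h.tg φ

noncomputable def botDepth (g : CTG S.bot) : ℕ∞ := g.tg.botDepth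

/-- `TruncIso g h d`: the rigid truncations of `g` and `h` at depth `d ≤ ω`
are isomorphic (`g†ω = g`). -/
def TruncIso {N M : Type} (g : TermGraph S.bot N) (h : TermGraph S.bot M)
    (d : ℕ∞) : Prop :=
  (d = ⊤ → TermGraph.Iso g h) ∧
  ∀ k : ℕ, d = (k : ℕ∞) → TermGraph.Iso (g.trunc k) (h.trunc k)

/-- The rigid similarity `sim†(g,h)`: the maximal `d ≤ ω` such that
`g†d ≅ h†d`. -/
noncomputable def simr (g h : CTG S.bot) : ℕ∞ :=
  sSup {d : ℕ∞ | TruncIso g.tg h.tg d}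

open Classical in
/-- The rigid distance `d†(g,h) = 2^{-sim†(g,h)}` (with `2^{-ω} = 0`). -/
noncomputable def rdist (g h : CTG S.bot) : ℝ :=
  if simr g h = ⊤ then 0 else (1 / 2 : ℝ) ^ (simr g h).toNat

def IsUB (A : Set (CTG S.bot)) (u : CTG S.bot) : Prop := ∀ g ∈ A, LeR g u

def IsLubR (A : Set (CTG S.bot)) (u : CTG S.bot) : Prop :=
  IsUB A u ∧ ∀ v, IsUB A v → LeR u v

def IsLB (A : Set (CTG S.bot)) (l : CTG S.bot) : Prop := ∀ g ∈ A, LeR l g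

def IsGlbR (A : Set (CTG S.bot)) (l : CTG S.bot) : Prop :=
  IsLB A l ∧ ∀ m, IsLB A m → LeR m l

/-- A directed set: non-empty and every two elements have an upper bound inside. -/
def DirectedR (A : Set (CTG S.bot)) : Prop :=
  A.Nonempty ∧ ∀ g ∈ A, ∀ h ∈ A, ∃ u ∈ A, LeR g u ∧ LeR h u

/-- `L` is the limit inferior `⨆_{β<α} ⨅_{β≤ι<α} f ι` of the ordinal-indexed
sequence `(f ι)_{ι<α}` in the rigid partial order. -/
def IsLiminfR (α : Ordinal.{0}) (f : Ordinal.{0} → CTG S.bot) (L : CTG S.bot) : Prop :=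
  ∃ inf : Ordinal.{0} → CTG S.bot,
    (∀ β < α, IsGlbR {g | ∃ ι, β ≤ ι ∧ ι < α ∧ g = f ι} (inf β)) ∧
    IsLubR {g | ∃ β < α, g = inf β} L

/-- Cauchy condition for an ordinal-indexed sequence w.r.t. the rigid distance. -/
def OrdCauchy (α : Ordinal.{0}) (f : Ordinal.{0} → CTG S.bot) : Prop :=
  ∀ ε : ℝ, 0 < ε → ∃ β < α, ∀ ι ι' : Ordinal.{0},
    β < ι → ι < ι' → ι' < α → rdist (f ι) (f ι') < ε

/-- Convergence of an ordinal-indexed sequence to `g` w.r.t. the rigid distance. -/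
def OrdTendsto (α : Ordinal.{0}) (f : Ordinal.{0} → CTG S.bot) (g : CTG S.bot) : Prop :=
  ∀ ε : ℝ, 0 < ε → ∃ β < α, ∀ ι : Ordinal.{0}, β < ι → ι < α → rdist (f ι) g < ε

/-- `u` is the unravelling of `g`: the term tree with the same positions and
labels as `g` and trivial aliasing. -/
def IsUnravelling (g u : CTG S) : Prop :=
  u.pos = g.pos ∧ (∀ π ∈ g.pos, u.labAt π = g.labAt π) ∧
  (∀ π π' : List ℕ, u.Aliases π π' ↔ (π ∈ g.pos ∧ π = π'))

end CTG

/-- A labelled quotient tree over a signature `S`. -/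
structure LQT (S : Signature) where
  P : Set (List ℕ)
  nonempty : P.Nonempty
  l : List ℕ → S.Sym
  rel : List ℕ → List ℕ → Prop
  rel_refl : ∀ π ∈ P, rel π π
  rel_symm : ∀ π π' : List ℕ, rel π π' → rel π' π
  rel_trans : ∀ π π' π'' : List ℕ, rel π π' → rel π' π'' → rel π π''
  rel_mem : ∀ π π' : List ℕ, rel π π' → π ∈ P ∧ π' ∈ P
  reach_mem : ∀ (π : List ℕ) (i : ℕ), π ++ [i] ∈ P → π ∈ P
  reach_ar : ∀ (π : List ℕ) (i : ℕ), π ++ [i] ∈ P → i < S.ar (l π)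
  congr_lab : ∀ π π' : List ℕ, rel π π' → l π = l π'
  congr_suc : ∀ (π π' : List ℕ) (i : ℕ), rel π π' → i < S.ar (l π) →
    rel (π ++ [i]) (π' ++ [i])

end TGR

namespace TGR

set_option linter.unusedSectionVars false
set_option linter.dupNamespace false

namespace TermGraph

variable {S : Signature} {N M : Type}

theorem isPos_cases {g : TermGraph S N} {π : List ℕ} {n : N} (h : g.IsPos π n) :
    (π = [] ∧ n = g.root) ∨
    ∃ (π' : List ℕ) (m : N) (i : Fin (S.ar (g.lab m))),
      g.IsPos π' m ∧ π = π' ++ [(i : ℕ)] ∧ n = g.suc m i := by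
  cases h with
  | root => exact Or.inl ⟨rfl, rfl⟩
  | step hm i => exact Or.inr ⟨_, _, i, hm, rfl, rfl⟩

theorem isPos_nil_inv {g : TermGraph S N} {n : N} (h : g.IsPos [] n) : n = g.root := by
  rcases isPos_cases h with ⟨-, rfl⟩ | ⟨π', m, i, -, he, -⟩
  · rfl
  · simp at he

theorem isPos_snoc_inv {g : TermGraph S N} {π : List ℕ} {i : ℕ} {n : N}
    (h : g.IsPos (π ++ [i]) n) :
    ∃ (m : N) (hi : i < S.ar (g.lab m)), g.IsPos π m ∧ n = g.suc m ⟨i, hi⟩ := by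
  rcases isPos_cases h with ⟨he, -⟩ | ⟨π', m, j, hm, he, hn⟩
  · simp at he
  · obtain ⟨h1, h2⟩ := List.append_inj' he.symm rfl
    obtain rfl : π' = π := h1
    obtain rfl : (j : ℕ) = i := by simpa using h2
    exact ⟨m, j.isLt, hm, by simpa using hn⟩

theorem isPos_unique {g : TermGraph S N} {π : List ℕ} {n n' : N}
    (h1 : g.IsPos π n) (h2 : g.IsPos π n') : n = n' := by
  induction h1 generalizing n' with
  | root => exact (isPos_nil_inv h2).symm
  | @step π m hm i ih =>
    obtain ⟨m', hi', hm', rfl⟩ := isPos_snoc_inv h2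
    obtain rfl : m = m' := ih hm'
    rfl

theorem nodeAt_eq {g : TermGraph S N} {π : List ℕ} {n : N} (h : g.IsPos π n) :
    g.nodeAt π = n := by
  have he : ∃ n, g.IsPos π n := ⟨n, h⟩
  rw [TermGraph.nodeAt, dif_pos he]
  exact isPos_unique he.choose_spec h

theorem isPos_prefix {g : TermGraph S N} {π : List ℕ} {i : ℕ} {n : N}
    (h : g.IsPos (π ++ [i]) n) : ∃ m, g.IsPos π m :=
  let ⟨m, _, hm, _⟩ := isPos_snoc_inv h
  ⟨m, hm⟩

theorem ar_none (S : Signature) : S.bot.ar none = 0 := rfl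

/-- A `⊥`-homomorphism preserves positions. -/
theorem IsDHom.isPos {g : TermGraph S.bot N} {h : TermGraph S.bot M} {φ : N → M}
    (hφ : IsDHom ({none} : Set (Option S.Sym)) g h φ) {π : List ℕ} {n : N} (hp : g.IsPos π n) :
    h.IsPos π (φ n) := by
  induction hp with
  | root => rw [hφ.root_eq]; exact IsPos.root
  | @step π m hm i ih =>
    have hlab : g.lab m ∉ ({none} : Set (Option S.Sym)) := by
      intro e
      replace e : g.lab m = none := e
      rw [e] at i
      exact absurd i.isLt (by simp [ar_none])
    have hl := hφ.lab_eq m hlab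
    have hi' : (i : ℕ) < S.bot.ar (h.lab (φ m)) := by rw [hl]; exact i.isLt
    have hs := hφ.suc_eq m hlab (i : ℕ) i.isLt hi'
    have heq : g.suc m ⟨(i : ℕ), i.isLt⟩ = g.suc m i := by simp
    rw [heq] at hs
    rw [hs]
    simpa using IsPos.step ih ⟨(i : ℕ), hi'⟩

end TermGraph


namespace CTG

variable {S : Signature}

theorem LeR.isPos {g h : CTG S.bot} (hle : LeR g h) {π : List ℕ} {n : ↥g.nodes}
    (hp : g.tg.IsPos π n) :
    ∃ m, h.tg.IsPos π m ∧ (g.tg.lab n ≠ none → h.tg.lab m = g.tg.lab n) := by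
  obtain ⟨φ, hφ, -⟩ := hle
  refine ⟨φ n, hφ.isPos hp, fun hne => ?_⟩
  exact hφ.lab_eq n (fun e => hne e)

theorem LeR.aliases {g h : CTG S.bot} (hle : LeR g h) {π π' : List ℕ}
    (ha : g.Aliases π π') : h.Aliases π π' := by
  obtain ⟨n, h1, h2⟩ := ha
  obtain ⟨φ, hφ, -⟩ := hle
  exact ⟨φ n, hφ.isPos h1, hφ.isPos h2⟩

variable (D : Set (CTG S.bot))

def bigP : Set (List ℕ) := ⋃ g ∈ D, CTG.pos g

def bigRel (π π' : List ℕ) : Prop := ∃ g ∈ D, CTG.Aliases g π π'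

def cls (π : List ℕ) : Set (List ℕ) := {π' | bigRel D π π'}

def bigLabP (π : List ℕ) (f : S.Sym) : Prop :=
  ∃ g ∈ D, ∃ n, g.tg.IsPos π n ∧ g.tg.lab n = some f

open Classical in
noncomputable def bigLab (π : List ℕ) : Option S.Sym :=
  if h : ∃ f, bigLabP D π f then some h.choose else none

variable {D}

theorem mem_bigP_iff {π : List ℕ} : π ∈ bigP D ↔ ∃ g ∈ D, ∃ n, g.tg.IsPos π n := by
  simp only [bigP, Set.mem_iUnion, CTG.pos, TermGraph.pos, Set.mem_setOf_eq]
  tauto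

theorem bigRel_refl {π : List ℕ} (hπ : π ∈ bigP D) : bigRel D π π := by
  obtain ⟨g, hg, n, hn⟩ := mem_bigP_iff.mp hπ
  exact ⟨g, hg, n, hn, hn⟩

theorem bigRel_symm {π π' : List ℕ} (h : bigRel D π π') : bigRel D π' π := by
  obtain ⟨g, hg, n, h1, h2⟩ := h
  exact ⟨g, hg, n, h2, h1⟩

theorem bigRel_memL {π π' : List ℕ} (h : bigRel D π π') : π ∈ bigP D := by
  obtain ⟨g, hg, n, h1, h2⟩ := h
  exact mem_bigP_iff.mpr ⟨g, hg, n, h1⟩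

theorem bigRel_memR {π π' : List ℕ} (h : bigRel D π π') : π' ∈ bigP D :=
  bigRel_memL (bigRel_symm h)

theorem mem_cls_self {π : List ℕ} (hπ : π ∈ bigP D) : π ∈ cls D π := bigRel_refl hπ

variable (hD : CTG.DirectedR D)
include hD

theorem bigRel_trans {π π' π'' : List ℕ} (h1 : bigRel D π π') (h2 : bigRel D π' π'') :
    bigRel D π π'' := by
  obtain ⟨g, hg, n, hn1, hn2⟩ := h1
  obtain ⟨g', hg', n', hn1', hn2'⟩ := h2
  obtain ⟨u, hu, hle, hle'⟩ := hD.2 g hg g' hg'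
  obtain ⟨φ, hφ, -⟩ := hle
  obtain ⟨φ', hφ', -⟩ := hle'
  have e : φ n = φ' n' := TermGraph.isPos_unique (hφ.isPos hn2) (hφ'.isPos hn1')
  exact ⟨u, hu, φ n, hφ.isPos hn1, e ▸ hφ'.isPos hn2'⟩

theorem cls_eq_of_rel {π π' : List ℕ} (h : bigRel D π π') : cls D π = cls D π' := by
  ext ρ
  constructor
  · exact fun hr => bigRel_trans hD (bigRel_symm h) hr
  · exact fun hr => bigRel_trans hD h hr

theorem bigLabP_unique {π : List ℕ} {f f' : S.Sym}
    (h1 : bigLabP D π f) (h2 : bigLabP D π f') : f = f' := by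
  obtain ⟨g, hg, n, hn, hl⟩ := h1
  obtain ⟨g', hg', n', hn', hl'⟩ := h2
  obtain ⟨u, hu, hle, hle'⟩ := hD.2 g hg g' hg'
  obtain ⟨φ, hφ, -⟩ := hle
  obtain ⟨φ', hφ', -⟩ := hle'
  have e : φ n = φ' n' := TermGraph.isPos_unique (hφ.isPos hn) (hφ'.isPos hn')
  have e1 : u.tg.lab (φ n) = some f := by
    rw [hφ.lab_eq n (fun e => by have e' : g.tg.lab n = none := e; rw [hl] at e'; simp at e'), hl]
  have e2 : u.tg.lab (φ' n') = some f' := by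
    rw [hφ'.lab_eq n' (fun e => by have e' : g'.tg.lab n' = none := e; rw [hl'] at e'; simp at e'), hl']
  rw [e, e2] at e1
  exact (Option.some_injective _ e1).symm

theorem bigLab_eq_some_iff {π : List ℕ} {f : S.Sym} :
    bigLab D π = some f ↔ bigLabP D π f := by
  constructor
  · intro h
    rw [bigLab] at h
    split_ifs at h with he
    · obtain rfl : he.choose = f := Option.some_injective _ h
      exact he.choose_spec
  · intro h
    have he : ∃ f, bigLabP D π f := ⟨f, h⟩
    rw [bigLab, dif_pos he]
    exact congrArg some (bigLabP_unique hD he.choose_spec h)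

theorem bigLabP_congr {π π' : List ℕ} {f : S.Sym} (hr : bigRel D π π')
    (h : bigLabP D π f) : bigLabP D π' f := by
  obtain ⟨g, hg, n, hn, hl⟩ := h
  obtain ⟨g', hg', m, hm1, hm2⟩ := hr
  obtain ⟨u, hu, hle, hle'⟩ := hD.2 g hg g' hg'
  obtain ⟨φ, hφ, -⟩ := hle
  obtain ⟨φ', hφ', -⟩ := hle'
  have e : φ n = φ' m := TermGraph.isPos_unique (hφ.isPos hn) (hφ'.isPos hm1)
  refine ⟨u, hu, φ' m, hφ'.isPos hm2, ?_⟩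
  rw [← e, hφ.lab_eq n (fun e => by have e' : g.tg.lab n = none := e; rw [hl] at e'; simp at e'), hl]

theorem bigLab_congr {π π' : List ℕ} (hr : bigRel D π π') :
    bigLab D π = bigLab D π' := by
  rcases h1 : bigLab D π with _ | f
  · rcases h2 : bigLab D π' with _ | f'
    · rfl
    · have := bigLabP_congr hD (bigRel_symm hr) (bigLab_eq_some_iff hD |>.mp h2)
      rw [(bigLab_eq_some_iff hD).mpr this] at h1
      exact absurd h1 (by simp)
  · exact ((bigLab_eq_some_iff hD).mpr
      (bigLabP_congr hD hr ((bigLab_eq_some_iff hD).mp h1))).symm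

theorem bigLab_isSome_of_ar {π : List ℕ} {i : ℕ} (hi : i < S.bot.ar (bigLab D π)) :
    ∃ f, bigLab D π = some f := by
  rcases h : bigLab D π with _ | f
  · rw [h] at hi; exact absurd hi (by simp [TermGraph.ar_none])
  · exact ⟨f, rfl⟩

omit hD

theorem bigP_snoc_inv {π : List ℕ} {i : ℕ} (h : π ++ [i] ∈ bigP D) :
    π ∈ bigP D ∧ ∃ f, bigLabP D π f ∧ i < S.ar f := by
  obtain ⟨g, hg, n, hn⟩ := mem_bigP_iff.mp h
  obtain ⟨m, hi, hm, -⟩ := TermGraph.isPos_snoc_inv hn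
  rcases hlm : g.tg.lab m with _ | f
  · rw [hlm] at hi; exact absurd hi (by simp [TermGraph.ar_none])
  · rw [hlm] at hi
    exact ⟨mem_bigP_iff.mpr ⟨g, hg, m, hm⟩, f, ⟨g, hg, m, hm, hlm⟩, hi⟩

include hD

theorem lt_ar_of_snoc_mem {π : List ℕ} {i : ℕ} (h : π ++ [i] ∈ bigP D) :
    i < S.bot.ar (bigLab D π) := by
  obtain ⟨-, f, hf, hi⟩ := bigP_snoc_inv h
  rw [(bigLab_eq_some_iff hD).mpr hf]
  exact hi

theorem bigP_snoc {π : List ℕ} {i : ℕ} (hπ : π ∈ bigP D)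
    (hi : i < S.bot.ar (bigLab D π)) : π ++ [i] ∈ bigP D := by
  obtain ⟨f, hf⟩ := bigLab_isSome_of_ar hD hi
  rw [hf] at hi
  obtain ⟨g, hg, n, hn, hl⟩ := (bigLab_eq_some_iff hD).mp hf
  have hi' : i < S.bot.ar (g.tg.lab n) := by rw [hl]; exact hi
  exact mem_bigP_iff.mpr ⟨g, hg, _, TermGraph.IsPos.step hn ⟨i, hi'⟩⟩

theorem bigRel_snoc {π π' : List ℕ} {i : ℕ} (hr : bigRel D π π')
    (hi : i < S.bot.ar (bigLab D π)) : bigRel D (π ++ [i]) (π' ++ [i]) := by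
  obtain ⟨f, hf⟩ := bigLab_isSome_of_ar hD hi
  rw [hf] at hi
  obtain ⟨g, hg, n, hn, hl⟩ := (bigLab_eq_some_iff hD).mp hf
  obtain ⟨g', hg', m, hm1, hm2⟩ := hr
  obtain ⟨u, hu, hle, hle'⟩ := hD.2 g hg g' hg'
  obtain ⟨φ, hφ, -⟩ := hle
  obtain ⟨φ', hφ', -⟩ := hle'
  have e : φ n = φ' m := TermGraph.isPos_unique (hφ.isPos hn) (hφ'.isPos hm1)
  have hlk : u.tg.lab (φ' m) = some f := by
    rw [← e, hφ.lab_eq n (fun e => by have e' : g.tg.lab n = none := e; rw [hl] at e'; simp at e'), hl]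
  have hik : i < S.bot.ar (u.tg.lab (φ' m)) := by rw [hlk]; exact hi
  exact ⟨u, hu, _, TermGraph.IsPos.step (hφ'.isPos hm1) ⟨i, hik⟩,
    TermGraph.IsPos.step (hφ'.isPos hm2) ⟨i, hik⟩⟩

end CTG


namespace CTG

variable {S : Signature} (D : Set (CTG S.bot))

def lubNodes : Set (Set (List ℕ)) := {C | ∃ π ∈ bigP D, C = cls D π}

theorem cls_mem_lubNodes {π : List ℕ} (hπ : π ∈ bigP D) : cls D π ∈ lubNodes D :=
  ⟨π, hπ, rfl⟩

noncomputable def rep (C : ↥(lubNodes D)) : List ℕ :=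
  (C.2 : ∃ π, π ∈ bigP D ∧ (C : Set (List ℕ)) = cls D π).choose

theorem rep_mem (C : ↥(lubNodes D)) : rep D C ∈ bigP D :=
  (C.2 : ∃ π, π ∈ bigP D ∧ (C : Set (List ℕ)) = cls D π).choose_spec.1

theorem rep_spec (C : ↥(lubNodes D)) : (C : Set (List ℕ)) = cls D (rep D C) :=
  (C.2 : ∃ π, π ∈ bigP D ∧ (C : Set (List ℕ)) = cls D π).choose_spec.2

variable {D} (hD : CTG.DirectedR D)
include hD

theorem nil_mem_bigP : [] ∈ bigP D := by
  obtain ⟨g, hg⟩ := hD.1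
  exact mem_bigP_iff.mpr ⟨g, hg, g.tg.root, TermGraph.IsPos.root⟩

theorem rep_rel {C : ↥(lubNodes D)} {π : List ℕ} (hπ : π ∈ bigP D)
    (hC : (C : Set (List ℕ)) = cls D π) : bigRel D (rep D C) π := by
  have : π ∈ cls D (rep D C) := by rw [← rep_spec D C, hC]; exact mem_cls_self hπ
  exact this

variable (D)

noncomputable def lubTG : TermGraph S.bot ↥(lubNodes D) where
  lab C := bigLab D (rep D C)
  suc C i := ⟨cls D (rep D C ++ [(i : ℕ)]),
    cls_mem_lubNodes D (bigP_snoc hD (rep_mem D C) i.isLt)⟩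
  root := ⟨cls D [], cls_mem_lubNodes D (nil_mem_bigP hD)⟩

variable {D}

theorem lubTG_isPos_elim {π : List ℕ} {n : ↥(lubNodes D)}
    (h : (lubTG D hD).IsPos π n) : π ∈ bigP D ∧ (n : Set (List ℕ)) = cls D π := by
  induction h with
  | root => exact ⟨nil_mem_bigP hD, rfl⟩
  | @step π m hm i ih =>
    obtain ⟨hπ, hme⟩ := ih
    have hrel : bigRel D (rep D m) π := rep_rel hD hπ hme
    have hi : (i : ℕ) < S.bot.ar (bigLab D (rep D m)) := i.isLt
    have hrel2 := bigRel_snoc hD hrel hi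
    refine ⟨bigRel_memR hrel2, ?_⟩
    show (cls D (rep D m ++ [(i : ℕ)]) : Set (List ℕ)) = cls D (π ++ [(i : ℕ)])
    exact cls_eq_of_rel hD hrel2

theorem lubTG_isPos_mk {π : List ℕ} (hπ : π ∈ bigP D) :
    (lubTG D hD).IsPos π ⟨cls D π, cls_mem_lubNodes D hπ⟩ := by
  induction π using List.reverseRecOn with
  | nil => exact TermGraph.IsPos.root
  | append_singleton π i ih =>
    obtain ⟨hπ', -⟩ := bigP_snoc_inv hπ
    have hi : i < S.bot.ar (bigLab D π) := lt_ar_of_snoc_mem hD hπ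
    have hpos := ih hπ'
    set C : ↥(lubNodes D) := ⟨cls D π, cls_mem_lubNodes D hπ'⟩ with hC
    have hrel : bigRel D (rep D C) π := rep_rel hD hπ' rfl
    have hi' : i < S.bot.ar ((lubTG D hD).lab C) := by
      show i < S.bot.ar (bigLab D (rep D C))
      rw [bigLab_congr hD hrel]; exact hi
    have hstep := TermGraph.IsPos.step hpos ⟨i, hi'⟩
    have : (lubTG D hD).suc C ⟨i, hi'⟩ = ⟨cls D (π ++ [i]), cls_mem_lubNodes D hπ⟩ := by
      apply Subtype.ext
      show (cls D (rep D C ++ [i]) : Set (List ℕ)) = cls D (π ++ [i])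
      exact cls_eq_of_rel hD (bigRel_snoc hD hrel (by rwa [bigLab_congr hD hrel]))
    rwa [this] at hstep

theorem lubTG_isPos_iff {π : List ℕ} {n : ↥(lubNodes D)} :
    (lubTG D hD).IsPos π n ↔ π ∈ bigP D ∧ (n : Set (List ℕ)) = cls D π := by
  constructor
  · exact lubTG_isPos_elim hD
  · rintro ⟨hπ, hn⟩
    have := lubTG_isPos_mk hD hπ
    rwa [show (⟨cls D π, cls_mem_lubNodes D hπ⟩ : ↥(lubNodes D)) = n from
      (Subtype.ext hn).symm] at this

variable (D)

noncomputable def lubCTG : CTG S.bot where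
  nodes := lubNodes D
  tg := lubTG D hD
  reach := by
    intro n
    obtain ⟨π, hπ, hn⟩ := (n.2 : ∃ π, π ∈ bigP D ∧ (n : Set (List ℕ)) = cls D π)
    exact ⟨π, (lubTG_isPos_iff hD).mpr ⟨hπ, hn⟩⟩
  canon := by
    intro n
    obtain ⟨π, hπ, hn⟩ := (n.2 : ∃ π, π ∈ bigP D ∧ (n : Set (List ℕ)) = cls D π)
    ext ρ
    constructor
    · intro hρ
      have hρ' : ρ ∈ cls D π := hn ▸ hρ
      replace hρ' : bigRel D π ρ := hρ'
      exact (lubTG_isPos_iff hD).mpr ⟨bigRel_memR hρ',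
        hn.trans (cls_eq_of_rel hD hρ')⟩
    · intro hρ
      obtain ⟨hρP, hcl⟩ := lubTG_isPos_elim hD hρ
      rw [hn] at hcl ⊢
      rw [hcl]
      exact mem_cls_self hρP

theorem lubCTG_pos : (lubCTG D hD).pos = bigP D := by
  ext π
  constructor
  · rintro ⟨n, hn⟩
    exact ((lubTG_isPos_iff hD).mp hn).1
  · intro hπ
    exact ⟨_, lubTG_isPos_mk hD hπ⟩

theorem lubCTG_aliases {π π' : List ℕ} :
    (lubCTG D hD).Aliases π π' ↔ bigRel D π π' := by
  constructor
  · rintro ⟨n, h1, h2⟩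
    obtain ⟨hπ, e1⟩ := lubTG_isPos_elim hD h1
    obtain ⟨hπ', e2⟩ := lubTG_isPos_elim hD h2
    have : π' ∈ cls D π := by rw [← e1, e2]; exact mem_cls_self hπ'
    exact this
  · intro hr
    refine ⟨⟨cls D π, cls_mem_lubNodes D (bigRel_memL hr)⟩,
      lubTG_isPos_mk hD (bigRel_memL hr), ?_⟩
    have := lubTG_isPos_mk hD (bigRel_memR hr)
    rwa [show (⟨cls D π', cls_mem_lubNodes D (bigRel_memR hr)⟩ : ↥(lubNodes D)) =
      ⟨cls D π, cls_mem_lubNodes D (bigRel_memL hr)⟩ from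
      Subtype.ext (cls_eq_of_rel hD hr).symm] at this

theorem lubCTG_labAt {π : List ℕ} (hπ : π ∈ bigP D) :
    (lubCTG D hD).labAt π = bigLab D π := by
  have hpos := lubTG_isPos_mk hD hπ
  show (lubTG D hD).labAt π = bigLab D π
  rw [TermGraph.labAt, TermGraph.nodeAt_eq hpos]
  show bigLab D (rep D ⟨cls D π, _⟩) = bigLab D π
  exact bigLab_congr hD (rep_rel hD hπ rfl)

end CTG


namespace CTG

section Bot

variable (S : Signature)

def botNodes : Set (Set (List ℕ)) := {{([] : List ℕ)}}

def botTG : TermGraph S.bot ↥botNodes where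
  lab _ := none
  suc _ i := absurd i.isLt (Nat.not_lt_zero _)
  root := ⟨{[]}, rfl⟩

variable {S}

theorem botTG_node_eq (n : ↥botNodes) : n = (botTG S).root :=
  Subtype.ext n.2

theorem botTG_isPos_nil {π : List ℕ} {n : ↥botNodes} (h : (botTG S).IsPos π n) :
    π = [] := by
  induction h with
  | root => rfl
  | step h i => exact absurd i.isLt (Nat.not_lt_zero _)

def botCTG : CTG S.bot where
  nodes := botNodes
  tg := botTG S
  reach := fun n => ⟨[], (botTG_node_eq n) ▸ TermGraph.IsPos.root⟩
  canon := by
    intro n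
    have hn : (n : Set (List ℕ)) = {[]} := n.2
    ext π
    simp only [TermGraph.nodePos, Set.mem_setOf_eq, hn, Set.mem_singleton_iff]
    constructor
    · rintro rfl
      rw [botTG_node_eq n]
      exact TermGraph.IsPos.root
    · exact botTG_isPos_nil

theorem botCTG_leR (g : CTG S.bot) : LeR botCTG g := by
  refine ⟨fun _ => g.tg.root, ⟨⟨rfl, ?_, ?_⟩, ?_⟩⟩
  · intro n hn
    exact absurd rfl hn
  · intro n hn
    exact absurd rfl hn
  · intro n hn
    exact absurd rfl hn

end Bot

section UB

variable {S : Signature}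

noncomputable def posOf (g : CTG S.bot) (n : ↥g.nodes) : List ℕ := (g.reach n).choose

theorem posOf_spec (g : CTG S.bot) (n : ↥g.nodes) : g.tg.IsPos (posOf g n) n :=
  (g.reach n).choose_spec

variable {D : Set (CTG S.bot)}

noncomputable def ubHom (g : CTG S.bot) (hg : g ∈ D) (n : ↥g.nodes) : ↥(lubNodes D) :=
  ⟨cls D (posOf g n),
    cls_mem_lubNodes D (mem_bigP_iff.mpr ⟨g, hg, n, posOf_spec g n⟩)⟩

variable (hD : CTG.DirectedR D)
include hD

theorem ubHom_isPos {g : CTG S.bot} (hg : g ∈ D) {π : List ℕ} {n : ↥g.nodes}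
    (h : g.tg.IsPos π n) : (lubTG D hD).IsPos π (ubHom g hg n) := by
  refine (lubTG_isPos_iff hD).mpr ⟨mem_bigP_iff.mpr ⟨g, hg, n, h⟩, ?_⟩
  show cls D (posOf g n) = cls D π
  exact cls_eq_of_rel hD ⟨g, hg, n, posOf_spec g n, h⟩

/-- Acyclicity in the lub implies acyclicity in each member of `D`. -/
theorem acy_down {w : CTG S.bot} (hw : w ∈ D) {π : List ℕ}
    (h : (lubTG D hD).IsAcyclicPos π) : w.tg.IsAcyclicPos π := by
  intro π₁ π₂ k p1 p2 k1 k2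
  have hr : bigRel D π₁ π₂ := ⟨w, hw, k, k1, k2⟩
  refine h π₁ π₂ ⟨cls D π₁, cls_mem_lubNodes D (bigRel_memL hr)⟩ p1 p2
    (lubTG_isPos_mk hD (bigRel_memL hr)) ?_
  exact (lubTG_isPos_iff hD).mpr ⟨bigRel_memR hr,
    show (cls D π₁ : Set (List ℕ)) = cls D π₂ from cls_eq_of_rel hD hr⟩

theorem ubHom_rigid (g : CTG S.bot) (hg : g ∈ D) :
    TermGraph.IsRigid ({none} : Set (Option S.Sym)) g.tg (lubTG D hD) (ubHom g hg) := by
  intro n hlab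
  ext π
  simp only [TermGraph.nodePosAcy, Set.mem_setOf_eq]
  constructor
  · rintro ⟨hp, hacy⟩
    refine ⟨ubHom_isPos hD hg hp, ?_⟩
    intro π₁ π₂ k p1 p2 k1 k2
    obtain ⟨m1, e1⟩ := lubTG_isPos_elim hD k1
    obtain ⟨m2, e2⟩ := lubTG_isPos_elim hD k2
    have hr : bigRel D π₁ π₂ := by
      have : π₂ ∈ cls D π₂ := mem_cls_self m2
      rw [← e2, e1] at this
      exact this
    obtain ⟨h, hh, m, hm1, hm2⟩ := hr
    obtain ⟨w, hw, hgw, hhw⟩ := hD.2 g hg h hh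
    obtain ⟨φ, hφ, hrig⟩ := hgw
    obtain ⟨φ', hφ', -⟩ := hhw
    have hπw : π ∈ w.tg.nodePosAcy (φ n) := by
      rw [← hrig n hlab]; exact ⟨hp, hacy⟩
    exact hπw.2 π₁ π₂ (φ' m) p1 p2 (hφ'.isPos hm1) (hφ'.isPos hm2)
  · rintro ⟨hp, hacy⟩
    obtain ⟨hπ, he⟩ := lubTG_isPos_elim hD hp
    have hr : bigRel D (posOf g n) π := by
      have : π ∈ cls D π := mem_cls_self hπ
      rw [← he] at this
      exact this
    obtain ⟨h, hh, m, hm1, hm2⟩ := hr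
    obtain ⟨w, hw, hgw, hhw⟩ := hD.2 g hg h hh
    obtain ⟨φ, hφ, hrig⟩ := hgw
    obtain ⟨φ', hφ', -⟩ := hhw
    have e : φ n = φ' m :=
      TermGraph.isPos_unique (hφ.isPos (posOf_spec g n)) (hφ'.isPos hm1)
    have hw1 : w.tg.IsPos π (φ n) := e ▸ hφ'.isPos hm2
    have hw2 : w.tg.IsAcyclicPos π := acy_down hD hw hacy
    have hmem : π ∈ w.tg.nodePosAcy (φ n) := ⟨hw1, hw2⟩
    rw [← hrig n hlab] at hmem
    exact hmem

theorem ubHom_hom (g : CTG S.bot) (hg : g ∈ D) :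
    TermGraph.IsDHom ({none} : Set (Option S.Sym)) g.tg (lubTG D hD) (ubHom g hg) := by
  refine ⟨?_, ?_, ?_⟩
  · apply Subtype.ext
    show cls D (posOf g g.tg.root) = cls D []
    exact cls_eq_of_rel hD ⟨g, hg, g.tg.root, posOf_spec g g.tg.root, TermGraph.IsPos.root⟩
  · intro n hlab
    obtain ⟨f, hf⟩ : ∃ f, g.tg.lab n = some f := by
      rcases hx : g.tg.lab n with _ | f
      · exact absurd hx hlab
      · exact ⟨f, rfl⟩
    show bigLab D (rep D (ubHom g hg n)) = g.tg.lab n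
    rw [bigLab_congr hD (rep_rel hD (mem_bigP_iff.mpr ⟨g, hg, n, posOf_spec g n⟩) rfl), hf]
    exact (bigLab_eq_some_iff hD).mpr ⟨g, hg, n, posOf_spec g n, hf⟩
  · intro n hlab i hi hi'
    have h1 : g.tg.IsPos (posOf g n ++ [i]) (g.tg.suc n ⟨i, hi⟩) := by
      simpa using TermGraph.IsPos.step (posOf_spec g n) ⟨i, hi⟩
    have h2 : (lubTG D hD).IsPos (posOf g n ++ [i])
        ((lubTG D hD).suc (ubHom g hg n) ⟨i, hi'⟩) := by
      simpa using TermGraph.IsPos.step (ubHom_isPos hD hg (posOf_spec g n)) ⟨i, hi'⟩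
    exact TermGraph.isPos_unique (ubHom_isPos hD hg h1) h2

theorem leR_lub (g : CTG S.bot) (hg : g ∈ D) : LeR g (lubCTG D hD) :=
  ⟨ubHom g hg, ubHom_hom hD g hg, ubHom_rigid hD g hg⟩

end UB

end CTG


namespace TermGraph

theorem nodeAt_isPos {S : Signature} {N : Type} {g : TermGraph S N} {π : List ℕ}
    (h : ∃ n, g.IsPos π n) : g.IsPos π (g.nodeAt π) := by
  obtain ⟨n, hn⟩ := h
  rw [nodeAt_eq hn]
  exact hn

end TermGraph

namespace CTG

variable {S : Signature} {D : Set (CTG S.bot)} {v : CTG S.bot}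

theorem v_isPos (hv : IsUB D v) {π : List ℕ} (hπ : π ∈ bigP D) :
    v.tg.IsPos π (v.tg.nodeAt π) := by
  obtain ⟨g, hg, n, hn⟩ := mem_bigP_iff.mp hπ
  obtain ⟨φ, hφ, -⟩ := hv g hg
  exact TermGraph.nodeAt_isPos ⟨φ n, hφ.isPos hn⟩

theorem rel_nodeAt (hv : IsUB D v) {π π' : List ℕ} (hr : bigRel D π π') :
    v.tg.nodeAt π = v.tg.nodeAt π' := by
  obtain ⟨g, hg, m, h1, h2⟩ := hr
  obtain ⟨φ, hφ, -⟩ := hv g hg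
  rw [TermGraph.nodeAt_eq (hφ.isPos h1), TermGraph.nodeAt_eq (hφ.isPos h2)]

noncomputable def lubHomV (v : CTG S.bot) (C : ↥(lubNodes D)) : ↥v.nodes :=
  v.tg.nodeAt (rep D C)

variable (hD : CTG.DirectedR D) (hv : IsUB D v)
include hD hv

theorem lubHomV_isPos {π : List ℕ} {C : ↥(lubNodes D)}
    (h : (lubTG D hD).IsPos π C) : v.tg.IsPos π (lubHomV v C) := by
  obtain ⟨hπ, he⟩ := lubTG_isPos_elim hD h
  have hr : bigRel D (rep D C) π := rep_rel hD hπ he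
  show v.tg.IsPos π (v.tg.nodeAt (rep D C))
  rw [rel_nodeAt hv hr]
  exact v_isPos hv hπ

theorem lubHomV_hom :
    TermGraph.IsDHom ({none} : Set (Option S.Sym)) (lubTG D hD) v.tg (lubHomV v) := by
  refine ⟨?_, ?_, ?_⟩
  · show v.tg.nodeAt (rep D ((lubTG D hD).root)) = v.tg.root
    rw [rel_nodeAt hv (rep_rel hD (nil_mem_bigP hD) rfl)]
    exact TermGraph.nodeAt_eq TermGraph.IsPos.root
  · intro C hlab
    obtain ⟨f, hf⟩ : ∃ f, bigLab D (rep D C) = some f := by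
      rcases hx : bigLab D (rep D C) with _ | f
      · exact absurd hx hlab
      · exact ⟨f, rfl⟩
    obtain ⟨g, hg, n, hn, hl⟩ := (bigLab_eq_some_iff hD).mp hf
    obtain ⟨φ, hφ, -⟩ := hv g hg
    show v.tg.lab (v.tg.nodeAt (rep D C)) = (lubTG D hD).lab C
    rw [TermGraph.nodeAt_eq (hφ.isPos hn)]
    show v.tg.lab (φ n) = bigLab D (rep D C)
    rw [hf, hφ.lab_eq n (fun e => by have e' : g.tg.lab n = none := e; rw [hl] at e'; simp at e'), hl]
  · intro C hlab i hi hi'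
    have hC : (lubTG D hD).IsPos (rep D C) C :=
      (lubTG_isPos_iff hD).mpr ⟨rep_mem D C, rep_spec D C⟩
    have h1 : (lubTG D hD).IsPos (rep D C ++ [i]) ((lubTG D hD).suc C ⟨i, hi⟩) := by
      simpa using TermGraph.IsPos.step hC ⟨i, hi⟩
    have h2 : v.tg.IsPos (rep D C ++ [i]) (v.tg.suc (lubHomV v C) ⟨i, hi'⟩) := by
      simpa using TermGraph.IsPos.step (lubHomV_isPos hD hv hC) ⟨i, hi'⟩
    exact TermGraph.isPos_unique (lubHomV_isPos hD hv h1) h2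

theorem lubHomV_rigid :
    TermGraph.IsRigid ({none} : Set (Option S.Sym)) (lubTG D hD) v.tg (lubHomV v) := by
  intro C hlab
  obtain ⟨f, hf⟩ : ∃ f, bigLab D (rep D C) = some f := by
    rcases hx : bigLab D (rep D C) with _ | f
    · exact absurd hx hlab
    · exact ⟨f, rfl⟩
  obtain ⟨g, hg, n, hn, hl⟩ := (bigLab_eq_some_iff hD).mp hf
  obtain ⟨φ, hφ, hrig⟩ := hv g hg
  have hlab' : g.tg.lab n ∉ ({none} : Set (Option S.Sym)) := (fun e => by have e' : g.tg.lab n = none := e; rw [hl] at e'; simp at e')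
  have e1 : lubHomV v C = φ n := TermGraph.nodeAt_eq (hφ.isPos hn)
  have e2 : ubHom g hg n = C := by
    apply Subtype.ext
    show cls D (posOf g n) = (C : Set (List ℕ))
    rw [rep_spec D C]
    exact cls_eq_of_rel hD ⟨g, hg, n, posOf_spec g n, hn⟩
  calc (lubTG D hD).nodePosAcy C
      = (lubTG D hD).nodePosAcy (ubHom g hg n) := by rw [e2]
    _ = g.tg.nodePosAcy n := (ubHom_rigid hD g hg n hlab').symm
    _ = v.tg.nodePosAcy (φ n) := hrig n hlab'
    _ = v.tg.nodePosAcy (lubHomV v C) := by rw [e1]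

theorem leR_lub_v : LeR (lubCTG D hD) v :=
  ⟨lubHomV v, lubHomV_hom hD hv, lubHomV_rigid hD hv⟩

end CTG


/-- The canonical partial term graphs ordered by `≤⊥r` form a
cpo: there is a least element `⊥`, and every directed set `D` has a least upper
bound, namely the canonical term graph determined by the labelled quotient tree
`(⋃_{g∈D} P(g), l, ⋃_{g∈D} ∼_g)` where `l(π) = f` if `f ∈ Σ` and `g(π) = f` for
some `g ∈ D`, and `l(π) = ⊥` otherwise. -/
theorem rigid_order_cpo (S : Signature) :
    (∃ bot : CTG S.bot, (∀ n : ↥bot.nodes, n = bot.tg.root) ∧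
        bot.tg.lab bot.tg.root = none ∧ ∀ g : CTG S.bot, CTG.LeR bot g) ∧
    (∀ D : Set (CTG S.bot), CTG.DirectedR D →
      ∃ u : CTG S.bot, CTG.IsLubR D u ∧
        u.pos = (⋃ g ∈ D, CTG.pos g) ∧
        (∀ π π' : List ℕ, u.Aliases π π' ↔ ∃ g ∈ D, CTG.Aliases g π π') ∧
        (∀ π ∈ u.pos, ∀ fS : S.Sym,
          (u.labAt π = some fS ↔
            ∃ g ∈ D, π ∈ CTG.pos g ∧ CTG.labAt g π = some fS))) := by
  constructor
  · exact ⟨CTG.botCTG, fun n => CTG.botTG_node_eq n, rfl, fun g => CTG.botCTG_leR g⟩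
  · intro D hD
    refine ⟨CTG.lubCTG D hD, ⟨fun g hg => CTG.leR_lub hD g hg,
      fun v hv => CTG.leR_lub_v hD hv⟩, CTG.lubCTG_pos D hD, ?_, ?_⟩
    · intro π π'
      rw [CTG.lubCTG_aliases D hD]
      exact Iff.rfl
    · intro π hπ fS
      rw [CTG.lubCTG_pos D hD] at hπ
      rw [CTG.lubCTG_labAt D hD hπ]
      refine (CTG.bigLab_eq_some_iff hD).trans ?_
      constructor
      · rintro ⟨g, hg, n, hn, hl⟩
        refine ⟨g, hg, ⟨n, hn⟩, ?_⟩
        show g.tg.lab (g.tg.nodeAt π) = some fS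
        rw [TermGraph.nodeAt_eq hn]
        exact hl
      · rintro ⟨g, hg, ⟨n, hn⟩, hlab⟩
        refine ⟨g, hg, n, hn, ?_⟩
        have : g.tg.lab (g.tg.nodeAt π) = some fS := hlab
        rwa [TermGraph.nodeAt_eq hn] at this


end TGR
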